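/- arXiv:2006.15529 — 2 statements merged into one kernel-verified Lean document; each statement's English description precedes it below -/
import Mathlib

section
/- For all l ∈ [0, π_2/2], sleaf_2(l)² = sin(2θ̄(l)) where θ̄(l) = ∫_0^l sleaf_2(t) dt. -/
open MeasureTheory intervalIntegral Set

private lemma leaf_cont {x : ℝ} (hx : x ^ 4 < 1) :
    ContinuousAt (fun t : ℝ => 1 / Real.sqrt (1 - t ^ 4)) x := by
  have h1 : (0:ℝ) < 1 - x ^ 4 := by linarith
  have h2 : Real.sqrt (1 - x ^ 4) ≠ 0 := (Real.sqrt_pos.mpr h1).ne'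
  exact continuousAt_const.div
    (Real.continuous_sqrt.continuousAt.comp (by fun_prop)) h2

private lemma leaf_meas : Measurable fun t : ℝ => 1 / Real.sqrt (1 - t ^ 4) := by
  apply Measurable.div measurable_const
  exact Real.continuous_sqrt.measurable.comp (by fun_prop)

private lemma leaf_nonneg (t : ℝ) : 0 ≤ 1 / Real.sqrt (1 - t ^ 4) := by positivity

private lemma leaf_int : IntervalIntegrable (fun t : ℝ => 1 / Real.sqrt (1 - t ^ 4)) volume 0 1 := by
  have hg0 : IntervalIntegrable (fun x : ℝ => x ^ (-(1/2) : ℝ)) volume (1 - 0) (1 - 1) :=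
    intervalIntegrable_rpow' (by norm_num)
  have hg : IntervalIntegrable (fun t : ℝ => (1 - t) ^ (-(1/2) : ℝ)) volume 0 1 := by
    simpa using hg0.comp_sub_left 1
  refine hg.mono_fun leaf_meas.aestronglyMeasurable.restrict ?_
  rw [Filter.EventuallyLE, ae_restrict_iff' measurableSet_uIoc]
  refine Filter.Eventually.of_forall fun t ht => ?_
  rw [uIoc_of_le (by norm_num : (0:ℝ) ≤ 1)] at ht
  obtain ⟨ht0, ht1⟩ := ht
  rcases eq_or_lt_of_le ht1 with h1 | h1
  · subst h1
    have h14 : (1:ℝ) - 1 ^ 4 = 0 := by norm_num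
    rw [h14, Real.sqrt_zero, div_zero, norm_zero]
    positivity
  · have ht4 : t ^ 4 ≤ t := by
      calc t ^ 4 ≤ t ^ 1 := pow_le_pow_of_le_one ht0.le ht1 (by norm_num)
      _ = t := pow_one t
    have hpos : (0:ℝ) < 1 - t := by linarith
    have hle : (1:ℝ) - t ≤ 1 - t ^ 4 := by linarith
    have hsq : Real.sqrt (1 - t) ≤ Real.sqrt (1 - t ^ 4) := Real.sqrt_le_sqrt hle
    have hsqpos : 0 < Real.sqrt (1 - t) := Real.sqrt_pos.mpr hpos
    have key : 1 / Real.sqrt (1 - t ^ 4) ≤ 1 / Real.sqrt (1 - t) :=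
      one_div_le_one_div_of_le hsqpos hsq
    have hrw : (1 - t) ^ (-(1/2) : ℝ) = 1 / Real.sqrt (1 - t) := by
      rw [Real.rpow_neg hpos.le, Real.sqrt_eq_rpow]
      norm_num
    rw [Real.norm_eq_abs, Real.norm_eq_abs, abs_of_nonneg (leaf_nonneg t),
      abs_of_nonneg (by rw [hrw]; positivity)]
    rw [hrw]; exact key

private lemma leaf_F_mono {a b : ℝ} (h0 : 0 ≤ a) (hab : a ≤ b) (hb : b ≤ 1) :
    (∫ t in (0:ℝ)..a, 1 / Real.sqrt (1 - t ^ 4)) ≤ ∫ t in (0:ℝ)..b, 1 / Real.sqrt (1 - t ^ 4) := by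
  have hia : IntervalIntegrable (fun t : ℝ => 1 / Real.sqrt (1 - t ^ 4)) volume 0 a :=
    leaf_int.mono_set (by
      rw [uIcc_of_le h0, uIcc_of_le (by norm_num : (0:ℝ) ≤ 1)]
      exact Icc_subset_Icc le_rfl (hab.trans hb))
  have hib : IntervalIntegrable (fun t : ℝ => 1 / Real.sqrt (1 - t ^ 4)) volume 0 b :=
    leaf_int.mono_set (by
      rw [uIcc_of_le (h0.trans hab), uIcc_of_le (by norm_num : (0:ℝ) ≤ 1)]
      exact Icc_subset_Icc le_rfl hb)
  have hsub := integral_interval_sub_left hib hia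
  have hnn : 0 ≤ ∫ t in a..b, 1 / Real.sqrt (1 - t ^ 4) :=
    intervalIntegral.integral_nonneg hab fun u _ => leaf_nonneg u
  linarith [hsub ▸ hnn]

private lemma leaf_F_strict {a b : ℝ} (h0 : 0 ≤ a) (hab : a < b) (hb : b ≤ 1) :
    (∫ t in (0:ℝ)..a, 1 / Real.sqrt (1 - t ^ 4)) < ∫ t in (0:ℝ)..b, 1 / Real.sqrt (1 - t ^ 4) := by
  set m := (a + b) / 2 with hm
  have ham : a < m := by simp only [hm]; linarith
  have hmb : m < b := by simp only [hm]; linarith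
  have hm1 : m < 1 := lt_of_lt_of_le hmb hb
  have hia : IntervalIntegrable (fun t : ℝ => 1 / Real.sqrt (1 - t ^ 4)) volume 0 a :=
    leaf_int.mono_set (by
      rw [uIcc_of_le h0, uIcc_of_le (by norm_num : (0:ℝ) ≤ 1)]
      exact Icc_subset_Icc le_rfl (by linarith))
  have him : IntervalIntegrable (fun t : ℝ => 1 / Real.sqrt (1 - t ^ 4)) volume 0 m :=
    leaf_int.mono_set (by
      rw [uIcc_of_le (by linarith : (0:ℝ) ≤ m), uIcc_of_le (by norm_num : (0:ℝ) ≤ 1)]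
      exact Icc_subset_Icc le_rfl (by linarith))
  have hiam : IntervalIntegrable (fun t : ℝ => 1 / Real.sqrt (1 - t ^ 4)) volume a m :=
    leaf_int.mono_set (by
      rw [uIcc_of_le ham.le, uIcc_of_le (by norm_num : (0:ℝ) ≤ 1)]
      exact Icc_subset_Icc h0 (by linarith))
  have hone : ∀ x ∈ Icc a m, (1:ℝ) ≤ 1 / Real.sqrt (1 - x ^ 4) := by
    intro x hx
    have hx0 : 0 ≤ x := h0.trans hx.1
    have hx4 : x ^ 4 < 1 := by
      have : x ^ 4 ≤ m ^ 4 := pow_le_pow_left₀ hx0 hx.2 4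
      have : m ^ 4 < 1 := by
        have := pow_lt_one₀ (by linarith : (0:ℝ) ≤ m) hm1 (by norm_num : 4 ≠ 0)
        exact this
      linarith [pow_le_pow_left₀ hx0 hx.2 4]
    have h1 : 0 < 1 - x ^ 4 := by linarith
    have hs1 : Real.sqrt (1 - x ^ 4) ≤ 1 := by
      have h := Real.sqrt_le_sqrt (sub_le_self 1 (by positivity : (0:ℝ) ≤ x ^ 4))
      simpa using h
    have hsp : 0 < Real.sqrt (1 - x ^ 4) := Real.sqrt_pos.mpr h1
    rw [le_div_iff₀ hsp]; linarith
  have hmono := intervalIntegral.integral_mono_on ham.le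
    (_root_.intervalIntegrable_const (c := (1:ℝ))) hiam hone
  have hconst : (∫ _x in a..m, (1:ℝ)) = m - a := by simp
  have hsub := integral_interval_sub_left him hia
  have h2 : (∫ t in (0:ℝ)..a, 1 / Real.sqrt (1 - t ^ 4)) + (m - a)
      ≤ ∫ t in (0:ℝ)..m, 1 / Real.sqrt (1 - t ^ 4) := by
    rw [hconst] at hmono
    linarith [hsub ▸ hmono]
  have h3 := leaf_F_mono (by linarith : (0:ℝ) ≤ m) hmb.le hb
  linarith

private lemma leaf_arcsin {s : ℝ} (h0 : 0 ≤ s) (h1 : s < 1) :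
    (∫ x in (0:ℝ)..s, (1 / Real.sqrt (1 - x ^ 4)) * x) = Real.arcsin (s ^ 2) / 2 := by
  have key : ∀ x ∈ uIcc (0:ℝ) s,
      HasDerivAt (fun y : ℝ => Real.arcsin (y ^ 2) / 2) ((1 / Real.sqrt (1 - x ^ 4)) * x) x := by
    intro x hx
    rw [uIcc_of_le h0] at hx
    have hx2 : x ^ 2 < 1 := by
      have ha : x ^ 2 ≤ s ^ 2 := pow_le_pow_left₀ hx.1 hx.2 2
      have hb : s ^ 2 < 1 := pow_lt_one₀ h0 h1 (by norm_num)
      linarith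
    have hne1 : x ^ 2 ≠ 1 := ne_of_lt hx2
    have hnem1 : x ^ 2 ≠ -1 := by nlinarith [sq_nonneg x]
    have hp : HasDerivAt (fun y : ℝ => y ^ 2) (2 * x) x := by
      simpa using hasDerivAt_pow 2 x
    have harc : HasDerivAt Real.arcsin (1 / Real.sqrt (1 - (x ^ 2) ^ 2)) (x ^ 2) :=
      Real.hasDerivAt_arcsin hnem1 hne1
    have hA : HasDerivAt (fun y : ℝ => Real.arcsin (y ^ 2))
        ((1 / Real.sqrt (1 - (x ^ 2) ^ 2)) * (2 * x)) x :=
      HasDerivAt.comp (h := fun y : ℝ => y ^ 2) (h₂ := Real.arcsin) x harc hp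
    have := hA.div_const 2
    have hxx : ((x:ℝ) ^ 2) ^ 2 = x ^ 4 := by ring
    rw [hxx] at this
    exact this.congr_deriv (by ring)
  have hcont : ContinuousOn (fun x : ℝ => (1 / Real.sqrt (1 - x ^ 4)) * x) (uIcc 0 s) := by
    intro x hx
    rw [uIcc_of_le h0] at hx
    have hx4 : x ^ 4 < 1 := by
      have ha : x ^ 4 ≤ s ^ 4 := pow_le_pow_left₀ hx.1 hx.2 4
      have hb : s ^ 4 < 1 := pow_lt_one₀ h0 h1 (by norm_num)
      linarith
    exact ((leaf_cont hx4).mul continuousAt_id).continuousWithinAt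
  have := intervalIntegral.integral_eq_sub_of_hasDerivAt key hcont.intervalIntegrable
  rw [this]
  norm_num

private noncomputable def leafF (r : ℝ) : ℝ := ∫ t in (0:ℝ)..r, 1 / Real.sqrt (1 - t ^ 4)

private lemma leafF_mono {a b : ℝ} (h0 : 0 ≤ a) (hab : a ≤ b) (hb : b ≤ 1) :
    leafF a ≤ leafF b := leaf_F_mono h0 hab hb

private lemma leafF_strict {a b : ℝ} (h0 : 0 ≤ a) (hab : a < b) (hb : b ≤ 1) :
    leafF a < leafF b := leaf_F_strict h0 hab hb

private lemma leafF_zero : leafF 0 = 0 := intervalIntegral.integral_same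

private lemma leafF_deriv {x : ℝ} (h0 : 0 ≤ x) (h1 : x < 1) :
    HasDerivAt leafF (1 / Real.sqrt (1 - x ^ 4)) x := by
  have hint : IntervalIntegrable (fun t : ℝ => 1 / Real.sqrt (1 - t ^ 4)) volume 0 x :=
    leaf_int.mono_set (by
      rw [uIcc_of_le h0, uIcc_of_le (by norm_num : (0:ℝ) ≤ 1)]
      exact Icc_subset_Icc le_rfl h1.le)
  have hx4 : x ^ 4 < 1 := by
    have := pow_lt_one₀ h0 h1 (show 4 ≠ 0 by norm_num)
    exact this
  exact intervalIntegral.integral_hasDerivAt_right hint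
    (leaf_meas.stronglyMeasurable.stronglyMeasurableAtFilter) (leaf_cont hx4)

theorem sleaf_sq_eq_sin (π₂ : ℝ) (hπ : π₂ = 2 * ∫ t in (0:ℝ)..1, 1 / Real.sqrt (1 - t ^ 4))
    (sleaf : ℝ → ℝ)
    (hs : ∀ l ∈ Set.Icc 0 (π₂ / 2), sleaf l ∈ Set.Icc (0:ℝ) 1 ∧
      (∫ t in (0:ℝ)..(sleaf l), 1 / Real.sqrt (1 - t ^ 4)) = l) :
    ∀ l ∈ Set.Icc 0 (π₂ / 2),
      (sleaf l) ^ 2 = Real.sin (2 * ∫ t in (0:ℝ)..l, sleaf t) := by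
  have hmem : ∀ x ∈ Icc (0:ℝ) (π₂ / 2), sleaf x ∈ Icc (0:ℝ) 1 := fun x hx => (hs x hx).1
  have hFs : ∀ x ∈ Icc (0:ℝ) (π₂ / 2), leafF (sleaf x) = x := fun x hx => (hs x hx).2
  have hF1 : leafF 1 = π₂ / 2 := by unfold leafF; linarith
  have hπpos : 0 < π₂ / 2 := by
    have h2 : leafF 0 < leafF 1 := leafF_strict le_rfl one_pos le_rfl
    rw [leafF_zero, hF1] at h2; exact h2
  have hFrange : ∀ y : ℝ, 0 ≤ y → y ≤ 1 → leafF y ∈ Icc (0:ℝ) (π₂ / 2) := by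
    intro y h0 h1
    constructor
    · have := leafF_mono le_rfl h0 h1; rwa [leafF_zero] at this
    · have := leafF_mono h0 h1 le_rfl; rwa [hF1] at this
  have hsleafF : ∀ y : ℝ, 0 ≤ y → y ≤ 1 → sleaf (leafF y) = y := by
    intro y hy0 hy1
    obtain ⟨hm, he⟩ := hs (leafF y) (hFrange y hy0 hy1)
    have he' : leafF (sleaf (leafF y)) = leafF y := he
    rcases lt_trichotomy (sleaf (leafF y)) y with h | h | h
    · have h2 := leafF_strict hm.1 h hy1
      rw [he'] at h2; exact absurd h2 (lt_irrefl _)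
    · exact h
    · have h2 := leafF_strict hy0 h hm.2
      rw [he'] at h2; exact absurd h2 (lt_irrefl _)
  have hsleaf_lt : ∀ x : ℝ, 0 ≤ x → x < π₂ / 2 → sleaf x < 1 := by
    intro x h0 hx
    rcases lt_or_eq_of_le (hmem x ⟨h0, hx.le⟩).2 with h | h
    · exact h
    · exfalso
      have h2 := hFs x ⟨h0, hx.le⟩
      rw [h, hF1] at h2
      linarith
  have hmonoS : StrictMonoOn sleaf (Icc 0 (π₂ / 2)) := by
    intro u hu v hv huv
    by_contra hle
    push_neg at hle
    have h2 : leafF (sleaf v) ≤ leafF (sleaf u) :=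
      leafF_mono (hmem v hv).1 hle (hmem u hu).2
    rw [hFs u hu, hFs v hv] at h2
    linarith
  have hsleaf0 : sleaf 0 = 0 := by
    have := hsleafF 0 le_rfl zero_le_one
    rwa [leafF_zero] at this
  -- continuity of sleaf on [0, l'] for l' < π₂/2
  have hcontOn : ∀ l' : ℝ, 0 ≤ l' → l' < π₂ / 2 → ContinuousOn sleaf (Icc 0 l') := by
    intro l' h0 hl'
    set l'' : ℝ := (l' + π₂ / 2) / 2 with hl''def
    have hl'l'' : l' < l'' := by simp only [hl''def]; linarith
    have hl''lt : l'' < π₂ / 2 := by simp only [hl''def]; linarith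
    have hl''0 : 0 ≤ l'' := by simp only [hl''def]; linarith
    have hsub : Icc (0:ℝ) l'' ⊆ Icc 0 (π₂ / 2) := Icc_subset_Icc le_rfl hl''lt.le
    have hmono'' : StrictMonoOn sleaf (Icc 0 l'') := hmonoS.mono hsub
    have hsl''lt : sleaf l'' < 1 := hsleaf_lt l'' hl''0 hl''lt
    intro a ha
    have hal'' : a < l'' := lt_of_le_of_lt ha.2 hl'l''
    have ha'' : a ∈ Icc (0:ℝ) l'' := ⟨ha.1, hal''.le⟩
    have hkey_right : ContinuousWithinAt sleaf (Ici a) a := by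
      apply hmono''.continuousWithinAt_right_of_exists_between
        (Icc_mem_nhdsGE_of_mem ⟨ha.1, hal''⟩)
      intro b hb
      have hsa_lt : sleaf a < sleaf l'' :=
        hmonoS (hsub ha'') ⟨hl''0, hl''lt.le⟩ hal''
      set y : ℝ := min b (sleaf l'') with hy
      have hy0 : 0 ≤ y := le_min ((hmem a (hsub ha'')).1.trans hb.le)
        (hmem l'' ⟨hl''0, hl''lt.le⟩).1
      have hy1 : y ≤ 1 := le_trans (min_le_right _ _) hsl''lt.le
      refine ⟨leafF y, ?_, ?_⟩
      · constructor
        · have := leafF_mono le_rfl hy0 hy1; rwa [leafF_zero] at this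
        · have h2 := leafF_mono hy0 (min_le_right _ _) (hmem l'' ⟨hl''0, hl''lt.le⟩).2
          rwa [hFs l'' ⟨hl''0, hl''lt.le⟩] at h2
      · rw [hsleafF y hy0 hy1]
        exact ⟨lt_min hb hsa_lt, min_le_left _ _⟩
    rcases eq_or_lt_of_le ha.1 with h0a | h0a
    · refine hkey_right.mono ?_
      rw [← h0a]
      exact Icc_subset_Ici_self
    · have hkey_left : ContinuousWithinAt sleaf (Iic a) a := by
        apply hmono''.continuousWithinAt_left_of_exists_between
          (Icc_mem_nhdsLE_of_mem ⟨h0a, hal''.le⟩)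
        intro b hb
        have hsa_pos : 0 < sleaf a := by
          have := hmonoS ⟨le_rfl, hπpos.le⟩ (hsub ha'') h0a
          rwa [hsleaf0] at this
        set y : ℝ := max b 0 with hy
        have hy0 : 0 ≤ y := le_max_right _ _
        have hylt : y < sleaf a := max_lt hb hsa_pos
        have hy1 : y ≤ 1 := hylt.le.trans (hmem a (hsub ha'')).2
        refine ⟨leafF y, ?_, ?_⟩
        · constructor
          · have := leafF_mono le_rfl hy0 hy1; rwa [leafF_zero] at this
          · have h2 := leafF_mono hy0 hylt.le (hmem a (hsub ha'')).2
            rw [hFs a (hsub ha'')] at h2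
            exact h2.trans hal''.le
        · rw [hsleafF y hy0 hy1]
          exact ⟨le_max_left _ _, hylt⟩
      have huniv : ContinuousWithinAt sleaf (Iic a ∪ Ici a) a := hkey_left.union hkey_right
      rw [Iic_union_Ici] at huniv
      exact (continuousWithinAt_univ sleaf a).mp huniv |>.continuousWithinAt
  -- the key identity for l' < π₂/2
  have key : ∀ l' : ℝ, 0 ≤ l' → l' < π₂ / 2 →
      (∫ t in (0:ℝ)..l', sleaf t) = Real.arcsin ((sleaf l') ^ 2) / 2 := by
    intro l' h0 hl'
    have hl'mem : l' ∈ Icc (0:ℝ) (π₂ / 2) := ⟨h0, hl'.le⟩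
    have hsm := hmem l' hl'mem
    have hs1 : sleaf l' < 1 := hsleaf_lt l' h0 hl'
    have hFs' : leafF (sleaf l') = l' := hFs l' hl'mem
    have huIcc : uIcc (0:ℝ) (sleaf l') = Icc 0 (sleaf l') := uIcc_of_le hsm.1
    have hderiv : ∀ x ∈ uIcc (0:ℝ) (sleaf l'),
        HasDerivAt leafF (1 / Real.sqrt (1 - x ^ 4)) x := by
      rw [huIcc]
      intro x hx
      exact leafF_deriv hx.1 (lt_of_le_of_lt hx.2 hs1)
    have hcont' : ContinuousOn (fun x : ℝ => 1 / Real.sqrt (1 - x ^ 4))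
        (uIcc (0:ℝ) (sleaf l')) := by
      rw [huIcc]
      intro x hx
      have hx4 : x ^ 4 < 1 := by
        have ha : x ^ 4 ≤ (sleaf l') ^ 4 := pow_le_pow_left₀ hx.1 hx.2 4
        have hb : (sleaf l') ^ 4 < 1 := pow_lt_one₀ hsm.1 hs1 (by norm_num)
        linarith
      exact (leaf_cont hx4).continuousWithinAt
    have hg : ContinuousOn sleaf (leafF '' uIcc (0:ℝ) (sleaf l')) := by
      apply (hcontOn l' h0 hl').mono
      rintro _ ⟨x, hx, rfl⟩
      rw [huIcc] at hx
      constructor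
      · have := leafF_mono le_rfl hx.1 (hx.2.trans hsm.2); rwa [leafF_zero] at this
      · have := leafF_mono hx.1 hx.2 hsm.2; rwa [hFs'] at this
    have hsubst := intervalIntegral.integral_comp_smul_deriv' hderiv hcont' hg
    rw [leafF_zero, hFs'] at hsubst
    have hcongr : ∀ x ∈ uIcc (0:ℝ) (sleaf l'),
        (1 / Real.sqrt (1 - x ^ 4)) • (sleaf ∘ leafF) x = (1 / Real.sqrt (1 - x ^ 4)) * x := by
      intro x hx
      rw [huIcc] at hx
      simp only [Function.comp_apply, smul_eq_mul]
      rw [hsleafF x hx.1 (hx.2.trans hsm.2)]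
    rw [intervalIntegral.integral_congr hcongr] at hsubst
    rw [← hsubst, leaf_arcsin hsm.1 hs1]
  -- main proof
  intro l hl
  rcases lt_or_eq_of_le hl.2 with hlt | heq
  · rw [key l hl.1 hlt]
    rw [show 2 * (Real.arcsin ((sleaf l) ^ 2) / 2) = Real.arcsin ((sleaf l) ^ 2) by ring]
    rw [Real.sin_arcsin (by nlinarith [(hmem l hl).1])
      (by nlinarith [(hmem l hl).1, (hmem l hl).2])]
  · -- endpoint l = π₂ / 2
    have hsl1 : sleaf l = 1 := by
      rcases lt_or_eq_of_le (hmem l hl).2 with h | h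
      · exfalso
        have h2 := leafF_strict (hmem l hl).1 h le_rfl
        rw [hFs l hl, hF1, heq] at h2
        exact absurd h2 (lt_irrefl _)
      · exact h
    set G : ℝ := ∫ t in (0:ℝ)..(π₂ / 2), sleaf t with hGdef
    have hSint : IntervalIntegrable sleaf volume 0 (π₂ / 2) := by
      apply MonotoneOn.intervalIntegrable
      rw [uIcc_of_le hπpos.le]
      exact hmonoS.monotoneOn
    have hGle : G ≤ Real.pi / 4 := by
      apply le_of_forall_pos_le_add
      intro ε hε
      set l₁ : ℝ := max 0 (π₂ / 2 - ε) with hl₁def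
      have hl₁0 : 0 ≤ l₁ := le_max_left _ _
      have hl₁lt : l₁ < π₂ / 2 := max_lt hπpos (by linarith)
      have hi1 : IntervalIntegrable sleaf volume 0 l₁ :=
        hSint.mono_set (by
          rw [uIcc_of_le hl₁0, uIcc_of_le hπpos.le]
          exact Icc_subset_Icc le_rfl hl₁lt.le)
      have hi2 : IntervalIntegrable sleaf volume l₁ (π₂ / 2) :=
        hSint.mono_set (by
          rw [uIcc_of_le hl₁lt.le, uIcc_of_le hπpos.le]
          exact Icc_subset_Icc hl₁0 le_rfl)
      have hsplit := intervalIntegral.integral_interval_sub_left hSint hi1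
      have htail : (∫ t in l₁..(π₂ / 2), sleaf t) ≤ π₂ / 2 - l₁ := by
        have hb := intervalIntegral.integral_mono_on hl₁lt.le hi2
          (_root_.intervalIntegrable_const (c := (1:ℝ)))
          (fun x hx => (hmem x ⟨hl₁0.trans hx.1, hx.2⟩).2)
        simpa using hb
      have hhead : (∫ t in (0:ℝ)..l₁, sleaf t) ≤ Real.pi / 4 := by
        rw [key l₁ hl₁0 hl₁lt]
        have := Real.arcsin_le_pi_div_two ((sleaf l₁) ^ 2)
        linarith
      have hεbound : π₂ / 2 - l₁ ≤ ε := by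
        have := le_max_right 0 (π₂ / 2 - ε)
        simp only [hl₁def]
        linarith [le_max_right (0:ℝ) (π₂ / 2 - ε)]
      linarith
    have hG0 : 0 ≤ G :=
      intervalIntegral.integral_nonneg hπpos.le (fun u hu => (hmem u hu).1)
    have hGlow : ∀ y : ℝ, 0 ≤ y → y < 1 → Real.arcsin y ≤ 2 * G := by
      intro y hy0 hy1
      set q : ℝ := Real.sqrt y with hq
      have hq0 : 0 ≤ q := Real.sqrt_nonneg y
      have hq2 : q ^ 2 = y := Real.sq_sqrt hy0
      have hq1 : q < 1 := by
        rw [show (1:ℝ) = Real.sqrt 1 by simp [Real.sqrt_one], hq]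
        exact Real.sqrt_lt_sqrt hy0 hy1
      set l₁ : ℝ := leafF q with hl₁
      have hl₁mem : l₁ ∈ Icc (0:ℝ) (π₂ / 2) := hFrange q hq0 hq1.le
      have hl₁lt : l₁ < π₂ / 2 := by
        have := leafF_strict hq0 hq1 le_rfl
        rw [hF1] at this
        exact this
      have hkeyl := key l₁ hl₁mem.1 hl₁lt
      rw [hsleafF q hq0 hq1.le, hq2] at hkeyl
      have hi1 : IntervalIntegrable sleaf volume 0 l₁ :=
        hSint.mono_set (by
          rw [uIcc_of_le hl₁mem.1, uIcc_of_le hπpos.le]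
          exact Icc_subset_Icc le_rfl hl₁lt.le)
      have hsplit := intervalIntegral.integral_interval_sub_left hSint hi1
      have htail : 0 ≤ ∫ t in l₁..(π₂ / 2), sleaf t :=
        intervalIntegral.integral_nonneg hl₁lt.le
          (fun u hu => (hmem u ⟨hl₁mem.1.trans hu.1, hu.2⟩).1)
      have : (∫ t in (0:ℝ)..l₁, sleaf t) ≤ G := by
        rw [hGdef]; linarith
      linarith [hkeyl ▸ this]
    have hsin1 : Real.sin (2 * G) = 1 := by
      refine le_antisymm (Real.sin_le_one _) ?_
      by_contra hcon
      push_neg at hcon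
      set y : ℝ := max 0 ((Real.sin (2 * G) + 1) / 2) with hy
      have hy0 : 0 ≤ y := le_max_left _ _
      have hy1 : y < 1 := max_lt one_pos (by linarith)
      have harc := hGlow y hy0 hy1
      have hsinmono : Real.sin (Real.arcsin y) ≤ Real.sin (2 * G) := by
        apply Real.strictMonoOn_sin.monotoneOn (Real.arcsin_mem_Icc y) _ harc
        constructor
        · linarith [Real.pi_pos]
        · linarith
      rw [Real.sin_arcsin (by linarith) hy1.le] at hsinmono
      have : (Real.sin (2 * G) + 1) / 2 ≤ y := le_max_right _ _
      linarith
    rw [hsl1, one_pow, heq, ← hGdef]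
    exact hsin1.symm
end

section
/- For all l ∈ [0, π_2/2], the function θ(l) = ∫_0^l cleaf_2(t) dt satisfies 0 ≤ θ(l) ≤ π/4, with θ(π_2/2) = π/4. -/
open MeasureTheory intervalIntegral Set

noncomputable def lg : ℝ → ℝ := fun t => 1 / Real.sqrt (1 - t ^ 4)

lemma lg_nonneg (t : ℝ) : 0 ≤ lg t := div_nonneg zero_le_one (Real.sqrt_nonneg _)

lemma lg_meas : Measurable lg := by
  unfold lg
  fun_prop

lemma lg_pos {t : ℝ} (h0 : 0 ≤ t) (h1 : t < 1) : 0 < lg t := by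
  have ht : t ^ 4 < 1 := pow_lt_one₀ h0 h1 (by norm_num)
  exact div_pos one_pos (Real.sqrt_pos.2 (by linarith))

lemma lg_contAt {t : ℝ} (h0 : 0 < t) (h1 : t < 1) : ContinuousAt lg t := by
  have ht : t ^ 4 < 1 := pow_lt_one₀ h0.le h1 (by norm_num)
  have hs : Real.sqrt (1 - t ^ 4) ≠ 0 := ne_of_gt (Real.sqrt_pos.2 (by linarith))
  exact continuousAt_const.div
    ((Real.continuous_sqrt.continuousAt).comp ((continuous_const.sub (continuous_pow 4)).continuousAt)) hs

lemma lg_int : IntervalIntegrable lg MeasureTheory.volume 0 1 := by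
  have hb : IntervalIntegrable (fun x : ℝ => (1 - x) ^ (-(1/2) : ℝ)) MeasureTheory.volume 0 1 := by
    have h := (intervalIntegral.intervalIntegrable_rpow' (a := 0) (b := 1) (r := -(1/2))
      (by norm_num)).comp_sub_left 1
    simpa using h.symm
  apply hb.mono_fun' lg_meas.aestronglyMeasurable
  filter_upwards [MeasureTheory.ae_restrict_mem measurableSet_uIoc] with t ht
  rw [Set.uIoc_of_le (by norm_num : (0:ℝ) ≤ 1)] at ht
  obtain ⟨ht0, ht1⟩ := ht
  have h1t : (0:ℝ) ≤ 1 - t := by linarith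
  rw [Real.norm_eq_abs, abs_of_nonneg (lg_nonneg t)]
  rcases eq_or_lt_of_le ht1 with rfl | hlt
  · simp [lg]
  · have h3 : t ^ 3 ≤ 1 := pow_le_one₀ ht0.le ht1
    have h4 : t ^ 4 ≤ t := by nlinarith
    have hs1 : 0 < Real.sqrt (1 - t) := Real.sqrt_pos.2 (by linarith)
    have hs2 : Real.sqrt (1 - t) ≤ Real.sqrt (1 - t ^ 4) := Real.sqrt_le_sqrt (by linarith)
    have : lg t ≤ 1 / Real.sqrt (1 - t) := by
      unfold lg
      exact one_div_le_one_div_of_le hs1 hs2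
    calc lg t ≤ 1 / Real.sqrt (1 - t) := this
      _ = (1 - t) ^ (-(1/2) : ℝ) := by
          rw [Real.rpow_neg h1t, Real.sqrt_eq_rpow, one_div]

lemma tlg_int : IntervalIntegrable (fun t => t * lg t) MeasureTheory.volume 0 1 := by
  apply lg_int.mono_fun ((measurable_id.mul lg_meas).aestronglyMeasurable.restrict)
  filter_upwards [MeasureTheory.ae_restrict_mem measurableSet_uIoc] with t ht
  rw [Set.uIoc_of_le (by norm_num : (0:ℝ) ≤ 1)] at ht
  obtain ⟨ht0, ht1⟩ := ht
  simp only [Real.norm_eq_abs, id_eq, abs_mul, Pi.mul_apply]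
  rw [abs_of_pos ht0, abs_of_nonneg (lg_nonneg t)]
  nlinarith [lg_nonneg t]

theorem theta_range (π₂ : ℝ) (hπ : π₂ = 2 * ∫ t in (0:ℝ)..1, 1 / Real.sqrt (1 - t ^ 4))
    (cleaf : ℝ → ℝ)
    (hc : ∀ l ∈ Set.Icc 0 (π₂ / 2), cleaf l ∈ Set.Icc (0:ℝ) 1 ∧
      (∫ t in (cleaf l)..1, 1 / Real.sqrt (1 - t ^ 4)) = l) :
    (∀ l ∈ Set.Icc 0 (π₂ / 2),
      0 ≤ (∫ t in (0:ℝ)..l, cleaf t) ∧ (∫ t in (0:ℝ)..l, cleaf t) ≤ Real.pi / 4) ∧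
    (∫ t in (0:ℝ)..(π₂ / 2), cleaf t) = Real.pi / 4 := by
  have hπ' : π₂ = 2 * ∫ t in (0:ℝ)..1, lg t := hπ
  set L : ℝ := π₂ / 2 with hLdef
  set F : ℝ → ℝ := fun r => ∫ t in r..1, lg t with hFdef
  have hc' : ∀ l ∈ Set.Icc 0 L, cleaf l ∈ Set.Icc (0:ℝ) 1 ∧ F (cleaf l) = l := hc
  have hF1 : F 1 = 0 := integral_same
  have hF0 : F 0 = L := by rw [hLdef, hπ']; ring
  have hL0 : 0 ≤ L := by
    rw [← hF0]
    exact intervalIntegral.integral_nonneg (by norm_num) (fun u _ => lg_nonneg u)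
  have hsub : ∀ a b : ℝ, 0 ≤ a → a ≤ b → b ≤ 1 →
      IntervalIntegrable lg MeasureTheory.volume a b := by
    intro a b ha hab hb1
    refine lg_int.mono_set ?_
    rw [Set.uIcc_of_le hab, Set.uIcc_of_le (by norm_num : (0:ℝ) ≤ 1)]
    exact Set.Icc_subset_Icc ha hb1
  have hFsub : ∀ a b : ℝ, 0 ≤ a → a ≤ b → b ≤ 1 → F a - F b = ∫ t in a..b, lg t := by
    intro a b ha hab hb1
    have h := intervalIntegral.integral_add_adjacent_intervals
      (hsub a b ha hab hb1) (hsub b 1 (ha.trans hab) hb1 le_rfl)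
    simp only [hFdef]
    linarith
  have hFanti : StrictAntiOn F (Set.Icc 0 1) := by
    intro a ha b hb hab
    have hpos : 0 < ∫ t in a..b, lg t := by
      refine intervalIntegral_pos_of_pos_on (hsub a b ha.1 hab.le hb.2) ?_ hab
      intro x hx
      exact lg_pos (ha.1.trans hx.1.le) (hx.2.trans_le hb.2)
    have := hFsub a b ha.1 hab.le hb.2
    linarith
  have hFmaps : ∀ x ∈ Set.Icc (0:ℝ) 1, F x ∈ Set.Icc 0 L := by
    intro x hx
    constructor
    · exact intervalIntegral.integral_nonneg hx.2 (fun u _ => lg_nonneg u)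
    · have := hFsub 0 x le_rfl hx.1 hx.2
      have h2 : 0 ≤ ∫ t in (0:ℝ)..x, lg t :=
        intervalIntegral.integral_nonneg hx.1 (fun u _ => lg_nonneg u)
      rw [← hF0]; linarith
  have hkey : ∀ x ∈ Set.Icc (0:ℝ) 1, cleaf (F x) = x := by
    intro x hx
    obtain ⟨hmem, heq⟩ := hc' (F x) (hFmaps x hx)
    exact hFanti.injOn hmem hx heq
  have hc1 : cleaf 0 = 1 := by
    have := hkey 1 (by norm_num)
    rwa [hF1] at this
  have hcL : cleaf L = 0 := by
    have := hkey 0 (by norm_num)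
    rwa [hF0] at this
  have hanti : StrictAntiOn cleaf (Set.Icc 0 L) := by
    intro l1 h1 l2 h2 hlt
    obtain ⟨m1, e1⟩ := hc' l1 h1
    obtain ⟨m2, e2⟩ := hc' l2 h2
    rcases lt_trichotomy (cleaf l2) (cleaf l1) with h | h | h
    · exact h
    · exfalso; rw [← e1, ← e2, h] at hlt; exact lt_irrefl _ hlt
    · exfalso
      have := hFanti m1 m2 h
      rw [e1, e2] at this
      exact absurd hlt (not_lt.2 this.le)
  have cleaf_int : IntervalIntegrable cleaf MeasureTheory.volume 0 L := by
    have h : AntitoneOn cleaf (Set.uIcc 0 L) := by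
      rw [Set.uIcc_of_le hL0]; exact hanti.antitoneOn
    exact h.intervalIntegrable
  have cleaf_nonneg : ∀ l ∈ Set.Icc (0:ℝ) L, 0 ≤ cleaf l := fun l hl => (hc' l hl).1.1
  have cleaf_sub : ∀ a b : ℝ, 0 ≤ a → a ≤ b → b ≤ L →
      IntervalIntegrable cleaf MeasureTheory.volume a b := by
    intro a b ha hab hb1
    refine cleaf_int.mono_set ?_
    rw [Set.uIcc_of_le hab, Set.uIcc_of_le hL0]
    exact Set.Icc_subset_Icc ha hb1
  -- continuity of cleaf at interior points
  have cleaf_contAt : ∀ s ∈ Set.Ioo (0:ℝ) L, ContinuousAt cleaf s := by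
    intro s hs
    have himg : cleaf '' Set.Icc 0 L = Set.Icc 0 1 := by
      apply Set.Subset.antisymm
      · rintro y ⟨l, hl, rfl⟩; exact (hc' l hl).1
      · rintro y hy; exact ⟨F y, hFmaps y hy, hkey y hy⟩
    have hmono : StrictMonoOn (fun l => -cleaf l) (Set.Icc 0 L) := by
      intro a ha b hb hab
      simpa using hanti ha hb hab
    have hcs : cleaf s ∈ Set.Ioo (0:ℝ) 1 := by
      constructor
      · rw [← hcL]; exact hanti (Set.mem_Icc_of_Ioo hs) (by constructor <;> [exact hL0; rfl]) hs.2
      · rw [← hc1]; exact hanti (by constructor <;> [rfl; exact hL0]) (Set.mem_Icc_of_Ioo hs) hs.1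
    have hcont : ContinuousAt (fun l => -cleaf l) s := by
      apply hmono.continuousAt_of_image_mem_nhds (Icc_mem_nhds hs.1 hs.2)
      have heq : (fun l => -cleaf l) '' Set.Icc 0 L = Set.Icc (-1) 0 := by
        have h1 : (fun l => -cleaf l) = (fun y : ℝ => -y) ∘ cleaf := rfl
        rw [h1, Set.image_comp, himg]
        have := Set.image_neg_Icc (a := (0:ℝ)) (b := 1)
        simpa using this
      rw [heq]
      exact Icc_mem_nhds (by linarith [hcs.2]) (by linarith [hcs.1])
    have h2 := hcont.neg
    have h3 : (fun l => -(-cleaf l)) = cleaf := by funext l; ring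
    rw [← h3]; exact h2
  -- θ and its properties
  set θ : ℝ → ℝ := fun l => ∫ t in (0:ℝ)..l, cleaf t with hθdef
  have hθcont : ContinuousOn θ (Set.Icc 0 L) := by
    have := intervalIntegral.continuousOn_primitive_interval' cleaf_int Set.left_mem_uIcc
    rwa [Set.uIcc_of_le hL0] at this
  have hθderiv : ∀ s ∈ Set.Ioo (0:ℝ) L, HasDerivAt θ (cleaf s) s := by
    intro s hs
    refine intervalIntegral.integral_hasDerivAt_right (cleaf_sub 0 s le_rfl hs.1.le hs.2.le)
      ⟨Set.Ioc 0 L, Ioc_mem_nhds hs.1 hs.2, cleaf_int.1.aestronglyMeasurable⟩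
      (cleaf_contAt s hs)
  have hFderiv : ∀ x ∈ Set.Ioo (0:ℝ) 1, HasDerivAt F (-(lg x)) x := by
    intro x hx
    exact intervalIntegral.integral_hasDerivAt_left (hsub x 1 hx.1.le hx.2.le le_rfl)
      ⟨Set.Ioo 0 1, Ioo_mem_nhds hx.1 hx.2, lg_meas.aestronglyMeasurable.restrict⟩
      (lg_contAt hx.1 hx.2)
  have lg_IccInt : IntegrableOn lg (Set.uIcc 0 1) MeasureTheory.volume := by
    rw [Set.uIcc_of_le (by norm_num : (0:ℝ) ≤ 1)]
    exact (integrableOn_Icc_iff_integrableOn_Ioc).2 lg_int.1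
  have tlg_IccInt : IntegrableOn (fun t => t * lg t) (Set.uIcc 0 1) MeasureTheory.volume := by
    rw [Set.uIcc_of_le (by norm_num : (0:ℝ) ≤ 1)]
    exact (integrableOn_Icc_iff_integrableOn_Ioc).2 tlg_int.1
  have hFcont : ContinuousOn F (Set.Icc 0 1) := by
    have := intervalIntegral.continuousOn_primitive_interval_left lg_IccInt
    rwa [Set.uIcc_of_le (by norm_num : (0:ℝ) ≤ 1)] at this
  have hGcont : ContinuousOn (fun x => ∫ t in x..1, t * lg t) (Set.Icc 0 1) := by
    have := intervalIntegral.continuousOn_primitive_interval_left tlg_IccInt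
    rwa [Set.uIcc_of_le (by norm_num : (0:ℝ) ≤ 1)] at this
  have hGderiv : ∀ x ∈ Set.Ioo (0:ℝ) 1,
      HasDerivAt (fun y => ∫ t in y..1, t * lg t) (-(x * lg x)) x := by
    intro x hx
    exact intervalIntegral.integral_hasDerivAt_left
      (tlg_int.mono_set (by
        rw [Set.uIcc_of_le hx.2.le, Set.uIcc_of_le (by norm_num : (0:ℝ) ≤ 1)]
        exact Set.Icc_subset_Icc hx.1.le le_rfl))
      ⟨Set.Ioo 0 1, Ioo_mem_nhds hx.1 hx.2,
        ((measurable_id.mul lg_meas).aestronglyMeasurable.restrict)⟩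
      (continuousAt_id.mul (lg_contAt hx.1 hx.2))
  -- the constancy argument
  set Φ : ℝ → ℝ := fun x => θ (F x) - ∫ t in x..1, t * lg t with hΦdef
  have hΦcont : ContinuousOn Φ (Set.Icc 0 1) :=
    (hθcont.comp hFcont (fun x hx => hFmaps x hx)).sub hGcont
  have hΦderiv : ∀ x ∈ Set.Ioo (0:ℝ) 1, HasDerivAt Φ 0 x := by
    intro x hx
    have hFx : F x ∈ Set.Ioo 0 L := by
      constructor
      · rw [← hF1]
        exact hFanti (Set.mem_Icc_of_Ioo hx) (by norm_num) hx.2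
      · rw [← hF0]
        exact hFanti (by norm_num) (Set.mem_Icc_of_Ioo hx) hx.1
    have h1 := (hθderiv (F x) hFx).comp x (hFderiv x hx)
    have h1' : HasDerivAt (fun y => θ (F y)) (cleaf (F x) * -(lg x)) x := h1
    rw [hkey x (Set.mem_Icc_of_Ioo hx)] at h1'
    have h2 := hGderiv x hx
    have h3 := h1'.sub h2
    refine h3.congr_deriv ?_
    ring
  have hconst : Φ 1 = Φ 0 := by
    have h0 : ∫ y in (0:ℝ)..1, (0:ℝ) = Φ 1 - Φ 0 :=
      intervalIntegral.integral_eq_sub_of_hasDerivAt_of_le zero_le_one hΦcont hΦderiv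
        intervalIntegrable_const
    simp only [intervalIntegral.integral_zero] at h0
    linarith
  have hΦ1 : Φ 1 = 0 := by
    simp only [hΦdef, hF1, hθdef]
    simp [intervalIntegral.integral_same]
  have hθL : θ L = ∫ t in (0:ℝ)..1, t * lg t := by
    have hΦ0 : Φ 0 = θ L - ∫ t in (0:ℝ)..1, t * lg t := by
      simp only [hΦdef, hF0]
    rw [← hconst, hΦ1] at hΦ0
    linarith
  -- value of the integral ∫ t in 0..1, t * lg t
  have hI : (∫ t in (0:ℝ)..1, t * lg t) = Real.pi / 4 := by
    have harc : ∀ x ∈ Set.Ioo (0:ℝ) 1,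
        HasDerivAt (fun t => Real.arcsin (t ^ 2) / 2) (x * lg x) x := by
      intro x hx
      have hx2a : (x:ℝ) ^ 2 ≠ -1 := by nlinarith [hx.1, hx.2]
      have hx2b : (x:ℝ) ^ 2 ≠ 1 := by nlinarith [hx.1, hx.2]
      have h1 : HasDerivAt (fun t : ℝ => t ^ 2) (2 * x) x := by
        simpa using hasDerivAt_pow 2 x
      have h2 : HasDerivAt Real.arcsin (1 / Real.sqrt (1 - (x ^ 2) ^ 2)) (x ^ 2) :=
        Real.hasDerivAt_arcsin hx2a hx2b
      have h3 := (HasDerivAt.comp (h := fun t : ℝ => t ^ 2) (x := x) h2 h1).div_const 2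
      refine h3.congr_deriv ?_
      have hx4 : ((x:ℝ) ^ 2) ^ 2 = x ^ 4 := by ring
      rw [hx4]
      unfold lg
      ring
    have hcont : ContinuousOn (fun t : ℝ => Real.arcsin (t ^ 2) / 2) (Set.Icc 0 1) :=
      (((Real.continuous_arcsin.comp (continuous_pow 2)).div_const 2).continuousOn)
    have h := intervalIntegral.integral_eq_sub_of_hasDerivAt_of_le zero_le_one hcont harc tlg_int
    rw [h]
    norm_num [Real.arcsin_one]
    ring
  have hmain : θ L = Real.pi / 4 := by rw [hθL, hI]
  refine ⟨?_, hmain⟩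
  intro l hl
  constructor
  · exact intervalIntegral.integral_nonneg hl.1
      (fun u hu => cleaf_nonneg u ⟨hu.1, hu.2.trans hl.2⟩)
  · have hadd := intervalIntegral.integral_add_adjacent_intervals
      (cleaf_sub 0 l le_rfl hl.1 hl.2) (cleaf_sub l L hl.1 hl.2 le_rfl)
    have h2 : 0 ≤ ∫ t in l..L, cleaf t :=
      intervalIntegral.integral_nonneg hl.2 (fun u hu => cleaf_nonneg u ⟨hl.1.trans hu.1, hu.2⟩)
    have : (∫ t in (0:ℝ)..l, cleaf t) ≤ θ L := by
      simp only [hθdef] at hadd ⊢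
      linarith
    linarith [hmain]
end
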